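/- Let G be an M(2,2)-connected graph with ear decomposition C₁,…,C_t (t ≥ 2) inducing subgraphs H_i, let Y = V(H_t) \ ⋃_{i<t} V(H_i). If Y ≠ ∅, then the subgraph of G induced by Y is connected. -/

import Mathlib

/-- The vertices incident to an edge set `C`. -/
def edgeVerts {V : Type*} (C : Set (Sym2 V)) : Set V :=
  {v : V | ∃ e ∈ C, v ∈ e}

/-- An edge set `C ⊆ E(G)` is (the edge set of) a `(2,2)`-circuit subgraph of `G`. -/
def IsCircuitEdges {V : Type*} (G : SimpleGraph V) (C : Set (Sym2 V)) : Prop :=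
  C ⊆ G.edgeSet ∧ C.ncard + 1 = 2 * (edgeVerts C).ncard ∧
  ∀ D : Set (Sym2 V), D ⊆ C → D ≠ C → D ≠ ∅ →
    D.ncard + 2 ≤ 2 * (edgeVerts D).ncard

/-- `G` is `M(2,2)`-connected: no isolated vertices, at least two edges, and every
pair of edges lies in a common `(2,2)`-circuit of `G`. -/
def M22Connected {V : Type*} (G : SimpleGraph V) : Prop :=
  (∀ v : V, ∃ w : V, G.Adj v w) ∧ 2 ≤ G.edgeSet.ncard ∧
  ∀ e ∈ G.edgeSet, ∀ f ∈ G.edgeSet,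
    ∃ C : Set (Sym2 V), IsCircuitEdges G C ∧ e ∈ C ∧ f ∈ C

namespace EarAux

open Set

variable {V : Type*}

/-- `(2,2)`-sparsity of an edge set. -/
def Sparse (A : Set (Sym2 V)) : Prop :=
  ∀ T ⊆ A, T.Nonempty → T.ncard + 2 ≤ 2 * (edgeVerts T).ncard

lemma edgeVerts_mono {A B : Set (Sym2 V)} (h : A ⊆ B) : edgeVerts A ⊆ edgeVerts B :=
  fun v ⟨e, he, hv⟩ => ⟨e, h he, hv⟩

lemma edgeVerts_union (A B : Set (Sym2 V)) :
    edgeVerts (A ∪ B) = edgeVerts A ∪ edgeVerts B := by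
  ext v
  simp only [edgeVerts, mem_setOf_eq, mem_union]
  constructor
  · rintro ⟨e, (he | he), hv⟩
    · exact Or.inl ⟨e, he, hv⟩
    · exact Or.inr ⟨e, he, hv⟩
  · rintro (⟨e, he, hv⟩ | ⟨e, he, hv⟩)
    · exact ⟨e, Or.inl he, hv⟩
    · exact ⟨e, Or.inr he, hv⟩

lemma edgeVerts_biUnion {ι : Type*} (s : Set ι) (f : ι → Set (Sym2 V)) :
    edgeVerts (⋃ j ∈ s, f j) = ⋃ j ∈ s, edgeVerts (f j) := by
  ext v
  simp only [edgeVerts, mem_setOf_eq, mem_iUnion, exists_prop]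
  constructor
  · rintro ⟨e, ⟨j, hj, hje⟩, hv⟩
    exact ⟨j, hj, e, hje, hv⟩
  · rintro ⟨j, hj, e, hje, hv⟩
    exact ⟨e, ⟨j, hj, hje⟩, hv⟩

lemma sparse_of_ssubset_circuit {G : SimpleGraph V} {Cc D : Set (Sym2 V)}
    (h : IsCircuitEdges G Cc) (hD : D ⊆ Cc) (hne : D ≠ Cc) : Sparse D := by
  intro T hT hTne
  refine h.2.2 T (hT.trans hD) (fun hTC => hne (subset_antisymm hD (hTC ▸ hT))) ?_
  exact hTne.ne_empty

lemma circuit_nonempty {G : SimpleGraph V} {Cc : Set (Sym2 V)}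
    (h : IsCircuitEdges G Cc) : Cc.Nonempty := by
  rcases Set.eq_empty_or_nonempty Cc with h0 | h0
  · exfalso
    have h2 := h.2.1
    rw [h0] at h2
    have : edgeVerts (∅ : Set (Sym2 V)) = ∅ := by
      ext v; simp [edgeVerts]
    rw [this] at h2
    simp at h2
  · exact h0

lemma edgeVerts_single_of_edge {G : SimpleGraph V} {e : Sym2 V} (he : e ∈ G.edgeSet) :
    (edgeVerts {e}).ncard = 2 := by
  induction e with
  | _ u v =>
    have hadj : G.Adj u v := he
    have : edgeVerts {s(u, v)} = {u, v} := by
      ext w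
      simp [edgeVerts, Sym2.mem_iff]
    rw [this]
    exact Set.ncard_pair hadj.ne
variable [Fintype V]

lemma exists_circuit_of_not_sparse {G : SimpleGraph V} {A : Set (Sym2 V)}
    (hAE : A ⊆ G.edgeSet) (h : ¬ Sparse A) :
    ∃ T, T ⊆ A ∧ IsCircuitEdges G T ∧ T.Nonempty := by
  classical
  set bad : Set ℕ :=
    {n | ∃ T, T ⊆ A ∧ T.Nonempty ∧ 2 * (edgeVerts T).ncard ≤ T.ncard + 1 ∧ T.ncard = n}
    with hbad
  have hbadne : bad.Nonempty := by
    rw [Sparse] at h; push_neg at h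
    obtain ⟨T, hTA, hTne, hc⟩ := h
    exact ⟨T.ncard, T, hTA, hTne, by omega, rfl⟩
  obtain ⟨T, hTA, hTne, hc, hcard⟩ := Nat.sInf_mem hbadne
  have hmin : ∀ D : Set (Sym2 V), D ⊆ T → D ≠ T → D ≠ ∅ →
      D.ncard + 2 ≤ 2 * (edgeVerts D).ncard := by
    intro D hD hDneT hDne
    by_contra hcon
    push_neg at hcon
    have hmem : D.ncard ∈ bad :=
      ⟨D, hD.trans hTA, nonempty_iff_ne_empty.mpr hDne, by omega, rfl⟩
    have hlt : D.ncard < T.ncard :=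
      Set.ncard_lt_ncard ⟨hD, fun hsub => hDneT (subset_antisymm hD hsub)⟩ (toFinite _)
    have := Nat.sInf_le hmem
    omega
  obtain ⟨e, heT⟩ := hTne
  have heE : e ∈ G.edgeSet := hAE (hTA heT)
  refine ⟨T, hTA, ⟨hTA.trans hAE, ?_, hmin⟩, ⟨e, heT⟩⟩
  by_cases hT1 : T \ {e} = ∅
  · exfalso
    have hTe : T = {e} := by
      apply subset_antisymm
      · intro x hx
        by_contra hxe
        exact absurd (by exact ⟨hx, hxe⟩ : x ∈ T \ {e}) (by rw [hT1]; exact notMem_empty x)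
      · intro x hx
        rw [mem_singleton_iff] at hx
        rw [hx]; exact heT
    rw [hTe] at hc
    rw [edgeVerts_single_of_edge heE, Set.ncard_singleton] at hc
    omega
  · have hcount := hmin (T \ {e}) diff_subset
      (fun hh => (hh ▸ (fun (hx : e ∈ T \ {e}) => hx.2 rfl)) heT) hT1
    have h1 : (T \ {e}).ncard = T.ncard - 1 := Set.ncard_diff_singleton_of_mem heT
    have hle := Set.ncard_le_ncard (edgeVerts_mono (diff_subset : T \ {e} ⊆ T)) (toFinite _)
    have h2 : 1 ≤ T.ncard := (Set.ncard_pos (toFinite _)).2 ⟨e, heT⟩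
    omega

lemma exists_max_ext (S M : Set (Sym2 V)) (hS : Sparse S) :
    ∃ N, N ⊆ M ∧ Sparse (S ∪ N) ∧ ∀ f ∈ M, f ∉ N → ¬ Sparse (S ∪ N ∪ {f}) := by
  classical
  set good : Set ℕ := {n | ∃ N, N ⊆ M ∧ Sparse (S ∪ N) ∧ N.ncard = n} with hgood
  have h0 : 0 ∈ good := ⟨∅, empty_subset _, by simpa using hS, Set.ncard_empty _⟩
  have hbdd : BddAbove good := by
    refine ⟨M.ncard, ?_⟩
    rintro n ⟨N, hNM, _, hn⟩
    exact hn ▸ Set.ncard_le_ncard hNM (toFinite _)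
  obtain ⟨N, hNM, hsp, hcard⟩ := Nat.sSup_mem ⟨0, h0⟩ hbdd
  refine ⟨N, hNM, hsp, fun f hf hfN hcon => ?_⟩
  have hmem : (N ∪ {f}).ncard ∈ good := by
    refine ⟨N ∪ {f}, union_subset hNM (by simpa using hf), ?_, rfl⟩
    rwa [← union_assoc]
  have hcount : (N ∪ {f}).ncard = N.ncard + 1 := by
    rw [union_singleton, Set.ncard_insert_of_notMem hfN (toFinite _)]
  have := le_csSup hbdd hmem
  omega

variable {G : SimpleGraph V} {t : ℕ} {C : Fin t → Set (Sym2 V)}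

lemma key_step (hcirc : ∀ i : Fin t, IsCircuitEdges G (C i))
    (hE3 : ∀ i : Fin t, 0 < (i : ℕ) → ∀ C' : Set (Sym2 V), IsCircuitEdges G C' →
      (C' ∩ ⋃ j ∈ Set.Iio i, C j).Nonempty →
      (C' \ ⋃ j ∈ Set.Iio i, C j).Nonempty →
      ¬ ((C' \ ⋃ j ∈ Set.Iio i, C j) ⊂ (C i \ ⋃ j ∈ Set.Iio i, C j)))
    (i : Fin t) (hi : 0 < (i : ℕ)) (S : Set (Sym2 V)) (hSsp : Sparse S)
    (hSsub : S ⊆ ⋃ j ∈ Set.Iio i, C j) :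
    ∃ N, N ⊆ C i \ ⋃ j ∈ Set.Iio i, C j ∧ Sparse (S ∪ N) ∧
      (C i \ ⋃ j ∈ Set.Iio i, C j).ncard ≤ N.ncard + 1 := by
  classical
  set D := ⋃ j ∈ Set.Iio i, C j with hD
  set M := C i \ D with hM
  obtain ⟨N, hNM, hsp, hmax⟩ := exists_max_ext S M hSsp
  refine ⟨N, hNM, hsp, ?_⟩
  by_contra hcon
  push_neg at hcon
  have hdiffcard : (M \ N).ncard = M.ncard - N.ncard := Set.ncard_diff hNM (toFinite _)
  have h2 : 1 < (M \ N).ncard := by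
    have := Set.ncard_le_ncard hNM (toFinite _)
    omega
  obtain ⟨f, hf, g, hg, hfg⟩ := (Set.one_lt_ncard (toFinite _)).1 h2
  have hfM : f ∈ M := hf.1
  have hfN : f ∉ N := hf.2
  have hnotsp := hmax f hfM hfN
  have hDedge : D ⊆ G.edgeSet := by
    intro e he
    obtain ⟨j, _, hje⟩ := mem_iUnion₂.1 he
    exact (hcirc j).1 hje
  have hsubE : S ∪ N ∪ {f} ⊆ G.edgeSet := by
    rintro e ((he | he) | he)
    · exact hDedge (hSsub he)
    · exact (hcirc i).1 (hNM he).1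
    · rw [mem_singleton_iff] at he
      rw [he]; exact (hcirc i).1 hfM.1
  obtain ⟨T, hTsub, hTcirc, hTne⟩ := exists_circuit_of_not_sparse hsubE hnotsp
  have hTbad : T.ncard + 1 = 2 * (edgeVerts T).ncard := hTcirc.2.1
  have hgT : g ∉ T := by
    intro hgT
    rcases hTsub hgT with (h | h) | h
    · exact hg.1.2 (hSsub h)
    · exact hg.2 h
    · rw [mem_singleton_iff] at h
      exact hfg h.symm
  have hfT : f ∈ T := by
    by_contra hfT
    have hsub : T ⊆ S ∪ N := by
      intro x hx
      rcases hTsub hx with h | h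
      · exact h
      · rw [mem_singleton_iff] at h
        exact absurd (h ▸ hx) hfT
    have := hsp T hsub hTne
    omega
  have hTD : (T ∩ D).Nonempty := by
    by_contra hTD
    rw [Set.not_nonempty_iff_eq_empty] at hTD
    have hTCi : T ⊆ C i := by
      intro x hx
      rcases hTsub hx with (h | h) | h
      · exact absurd (by exact ⟨hx, hSsub h⟩ : x ∈ T ∩ D)
          (by rw [hTD]; exact notMem_empty x)
      · exact (hNM h).1
      · rw [mem_singleton_iff] at h
        rw [h]; exact hfM.1
    have hTneCi : T ≠ C i := by
      intro h
      exact hgT (h ▸ hg.1.1)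
    have := (hcirc i).2.2 T hTCi hTneCi hTne.ne_empty
    omega
  have hTdiff : T \ D ⊂ M := by
    constructor
    · intro x hx
      rcases hTsub hx.1 with (h | h) | h
      · exact absurd (hSsub h) hx.2
      · exact hNM h
      · rw [mem_singleton_iff] at h
        rw [h]; exact hfM
    · intro hMsub
      exact hgT (hMsub hg.1).1
  exact hE3 i hi T hTcirc hTD ⟨f, hfT, hfM.2⟩ hTdiff

lemma lower_bound (hcirc : ∀ i : Fin t, IsCircuitEdges G (C i))
    (hE1 : ∀ i : Fin t, 0 < (i : ℕ) → (C i ∩ ⋃ j ∈ Set.Iio i, C j).Nonempty)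
    (hE2 : ∀ i : Fin t, 0 < (i : ℕ) → (C i \ ⋃ j ∈ Set.Iio i, C j).Nonempty)
    (i : Fin t) (hi : 0 < (i : ℕ)) :
    2 * ((edgeVerts (C i)) \ (edgeVerts (⋃ j ∈ Set.Iio i, C j))).ncard + 1 ≤
      (C i \ ⋃ j ∈ Set.Iio i, C j).ncard := by
  classical
  set D := ⋃ j ∈ Set.Iio i, C j with hD
  have hK := hE1 i hi
  have hKne : C i ∩ D ≠ C i := by
    obtain ⟨e, he⟩ := hE2 i hi
    intro h
    exact he.2 (h.symm ▸ he.1 : e ∈ C i ∩ D).2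
  have hcount := (hcirc i).2.2 _ inter_subset_left hKne hK.ne_empty
  have hsplit : (C i ∩ D).ncard + (C i \ D).ncard = (C i).ncard :=
    Set.ncard_inter_add_ncard_diff_eq_ncard _ _ (toFinite _)
  have hEsub : edgeVerts (C i ∩ D) ⊆ edgeVerts (C i) ∩ edgeVerts D :=
    subset_inter (edgeVerts_mono inter_subset_left) (edgeVerts_mono inter_subset_right)
  have h1 := Set.ncard_le_ncard hEsub (toFinite _)
  have h2 : (edgeVerts (C i) ∩ edgeVerts D).ncard +
      (edgeVerts (C i) \ edgeVerts D).ncard = (edgeVerts (C i)).ncard :=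
    Set.ncard_inter_add_ncard_diff_eq_ncard _ _ (toFinite _)
  have h3 := (hcirc i).2.1
  omega

lemma build_sparse (hcirc : ∀ i : Fin t, IsCircuitEdges G (C i))
    (hE1 : ∀ i : Fin t, 0 < (i : ℕ) → (C i ∩ ⋃ j ∈ Set.Iio i, C j).Nonempty)
    (hE2 : ∀ i : Fin t, 0 < (i : ℕ) → (C i \ ⋃ j ∈ Set.Iio i, C j).Nonempty)
    (hE3 : ∀ i : Fin t, 0 < (i : ℕ) → ∀ C' : Set (Sym2 V), IsCircuitEdges G C' →
      (C' ∩ ⋃ j ∈ Set.Iio i, C j).Nonempty →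
      (C' \ ⋃ j ∈ Set.Iio i, C j).Nonempty →
      ¬ ((C' \ ⋃ j ∈ Set.Iio i, C j) ⊂ (C i \ ⋃ j ∈ Set.Iio i, C j))) :
    ∀ k, k < t → ∃ S, S ⊆ (⋃ j ∈ {j : Fin t | (j : ℕ) ≤ k}, C j) ∧ Sparse S ∧
      2 * (edgeVerts (⋃ j ∈ {j : Fin t | (j : ℕ) ≤ k}, C j)).ncard ≤ S.ncard + 2 := by
  intro k
  induction k with
  | zero =>
    intro h0
    have hEq : (⋃ j ∈ {j : Fin t | (j : ℕ) ≤ 0}, C j) = C ⟨0, h0⟩ := by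
      ext e
      simp only [mem_iUnion, mem_setOf_eq, exists_prop]
      constructor
      · rintro ⟨j, hj, hje⟩
        have : j = ⟨0, h0⟩ := Fin.ext (by simp; omega)
        rwa [← this]
      · intro h
        exact ⟨⟨0, h0⟩, by simp, h⟩
    obtain ⟨e, he⟩ := circuit_nonempty (hcirc ⟨0, h0⟩)
    refine ⟨C ⟨0, h0⟩ \ {e}, ?_, ?_, ?_⟩
    · rw [hEq]; exact diff_subset
    · refine sparse_of_ssubset_circuit (hcirc _) diff_subset ?_
      intro h
      exact (h.symm ▸ he : e ∈ C ⟨0, h0⟩ \ {e}).2 rfl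
    · rw [hEq]
      have hc := (hcirc ⟨0, h0⟩).2.1
      have hd := Set.ncard_diff_singleton_of_mem he
      have hpos : 1 ≤ (C ⟨0, h0⟩).ncard := (Set.ncard_pos (toFinite _)).2 ⟨e, he⟩
      omega
  | succ k ih =>
    intro hk1
    obtain ⟨S, hSsub, hSsp, hScount⟩ := ih (by omega)
    set i : Fin t := ⟨k + 1, hk1⟩ with hidef
    have hIio : Set.Iio i = {j : Fin t | (j : ℕ) ≤ k} := by
      ext j
      simp only [Set.mem_Iio, mem_setOf_eq, Fin.lt_def, hidef]
      omega
    have hipos : 0 < (i : ℕ) := by simp [hidef]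
    have hstep := key_step hcirc hE3 i hipos S hSsp (by rw [hIio]; exact hSsub)
    rw [hIio] at hstep
    obtain ⟨N, hNsub, hNsp, hNcount⟩ := hstep
    have hlow := lower_bound hcirc hE1 hE2 i hipos
    rw [hIio] at hlow
    set Ek := ⋃ j ∈ {j : Fin t | (j : ℕ) ≤ k}, C j with hEk
    have hEk1 : (⋃ j ∈ {j : Fin t | (j : ℕ) ≤ k + 1}, C j) = Ek ∪ C i := by
      ext e
      simp only [hEk, mem_iUnion, mem_union, mem_setOf_eq, exists_prop]
      constructor
      · rintro ⟨j, hj, hje⟩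
        rcases Nat.lt_or_ge (j : ℕ) (k + 1) with h | h
        · exact Or.inl ⟨j, by omega, hje⟩
        · have : j = i := Fin.ext (by simp [hidef]; omega)
          exact Or.inr (this ▸ hje)
      · rintro (⟨j, hj, hje⟩ | h)
        · exact ⟨j, by omega, hje⟩
        · exact ⟨i, by simp [hidef], h⟩
    refine ⟨S ∪ N, ?_, hNsp, ?_⟩
    · rw [hEk1]
      exact union_subset (hSsub.trans subset_union_left)
        ((hNsub.trans diff_subset).trans subset_union_right)
    · rw [hEk1]
      have hcardU : (S ∪ N).ncard = S.ncard + N.ncard := by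
        refine Set.ncard_union_eq ?_ (toFinite _) (toFinite _)
        exact Set.disjoint_left.mpr fun x hxS hxN => (hNsub hxN).2 (hSsub hxS)
      have hEV : edgeVerts (Ek ∪ C i) = edgeVerts Ek ∪ edgeVerts (C i) :=
        edgeVerts_union _ _
      have hEVcard : (edgeVerts Ek ∪ edgeVerts (C i)).ncard =
          (edgeVerts Ek).ncard + (edgeVerts (C i) \ edgeVerts Ek).ncard := by
        rw [← Set.union_diff_self]
        exact Set.ncard_union_eq Set.disjoint_sdiff_right (toFinite _) (toFinite _)
      rw [hEV]
      omega

end EarAux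

open EarAux Set

/-- Let `G` be `M(2,2)`-connected with an ear decomposition `C 0, …, C (t-1)`
(`t ≥ 2`) of its `(2,2)`-sparsity matroid, `H_i` the subgraph induced by `C i`,
`Y = V(H_t) \ ⋃_{i<t} V(H_i)` and `X = V(H_t) \ Y`.  If `Y ≠ ∅`, then the
subgraph of `G` induced by `Y` is connected. -/
theorem ear_decomposition_Y_connected {V : Type*} [Fintype V]
    (G : SimpleGraph V) (hM : M22Connected G)
    (t : ℕ) (ht : 2 ≤ t) (C : Fin t → Set (Sym2 V))
    (hcirc : ∀ i : Fin t, IsCircuitEdges G (C i))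
    (hE1 : ∀ i : Fin t, 0 < (i : ℕ) → (C i ∩ ⋃ j ∈ Set.Iio i, C j).Nonempty)
    (hE2 : ∀ i : Fin t, 0 < (i : ℕ) → (C i \ ⋃ j ∈ Set.Iio i, C j).Nonempty)
    (hE3 : ∀ i : Fin t, 0 < (i : ℕ) → ∀ C' : Set (Sym2 V), IsCircuitEdges G C' →
      (C' ∩ ⋃ j ∈ Set.Iio i, C j).Nonempty →
      (C' \ ⋃ j ∈ Set.Iio i, C j).Nonempty →
      ¬ ((C' \ ⋃ j ∈ Set.Iio i, C j) ⊂ (C i \ ⋃ j ∈ Set.Iio i, C j)))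
    (hcover : (⋃ i : Fin t, C i) = G.edgeSet)
    (last : Fin t) (hlast : (last : ℕ) = t - 1)
    (Y : Set V) (hY : Y = edgeVerts (C last) \ ⋃ j ∈ Set.Iio last, edgeVerts (C j))
    (X : Set V) (hX : X = edgeVerts (C last) \ Y)
    (hYne : Y.Nonempty) :
    (G.induce Y).Connected := by
  classical
  have hlastpos : 0 < (last : ℕ) := by omega
  have hIio : {j : Fin t | (j : ℕ) ≤ t - 2} = Set.Iio last := by
    ext j
    simp only [Set.mem_Iio, mem_setOf_eq, Fin.lt_def, hlast]
    omega
  obtain ⟨S, hSsub, hSsp, hScount⟩ := build_sparse hcirc hE1 hE2 hE3 (t - 2) (by omega)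
  rw [hIio] at hSsub hScount
  obtain ⟨N, hNsub, hNsp, hNcount⟩ := key_step hcirc hE3 last hlastpos S hSsp hSsub
  set Cl := C last with hCldef
  set D := ⋃ j ∈ Set.Iio last, C j with hDdef
  -- vertex set identities
  have hEVD : edgeVerts D = ⋃ j ∈ Set.Iio last, edgeVerts (C j) := edgeVerts_biUnion _ _
  have hYD : Y = edgeVerts Cl \ edgeVerts D := by rw [hY, hEVD]
  have hYsub : Y ⊆ edgeVerts Cl := by rw [hYD]; exact diff_subset
  have hXD : X = edgeVerts Cl ∩ edgeVerts D := by
    rw [hX, hYD, Set.diff_diff_right_self]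
  have hXY : X.ncard + Y.ncard = (edgeVerts Cl).ncard := by
    rw [hX]
    exact Set.ncard_diff_add_ncard_of_subset hYsub (toFinite _)
  have hXdisjY : Disjoint X Y := by rw [hX]; exact disjoint_sdiff_left
  -- m ≤ 2|Y| + 1
  have hm2 : (Cl \ D).ncard ≤ 2 * Y.ncard + 1 := by
    rcases Set.eq_empty_or_nonempty (S ∪ N) with hSN | hSN
    · have hNemp : N = ∅ := by
        rw [Set.union_empty_iff] at hSN; exact hSN.2
      rw [hNemp, Set.ncard_empty] at hNcount
      omega
    · have hub := hNsp (S ∪ N) subset_rfl hSN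
      have hsub2 : edgeVerts (S ∪ N) ⊆ edgeVerts D ∪ edgeVerts Cl := by
        have h1 : S ∪ N ⊆ D ∪ Cl :=
          union_subset (hSsub.trans subset_union_left)
            ((hNsub.trans diff_subset).trans subset_union_right)
        rw [← edgeVerts_union]
        exact edgeVerts_mono h1
      have hEVcard : (edgeVerts D ∪ edgeVerts Cl).ncard =
          (edgeVerts D).ncard + Y.ncard := by
        rw [hYD, ← Set.union_diff_self]
        exact Set.ncard_union_eq Set.disjoint_sdiff_right (toFinite _) (toFinite _)
      have h1 := Set.ncard_le_ncard hsub2 (toFinite _)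
      have hcardU : (S ∪ N).ncard = S.ncard + N.ncard := by
        refine Set.ncard_union_eq ?_ (toFinite _) (toFinite _)
        exact Set.disjoint_left.mpr fun x hxS hxN => (hNsub hxN).2 (hSsub hxS)
      omega
  have hClD : (Cl ∩ D).ncard + (Cl \ D).ncard = Cl.ncard :=
    Set.ncard_inter_add_ncard_diff_eq_ncard _ _ (toFinite _)
  have hClcount := (hcirc last).2.1
  rw [← hCldef] at hClcount
  -- connectivity
  by_contra hnc
  haveI hYne' : Nonempty Y := hYne.to_subtype
  have hnpre : ¬ (G.induce Y).Preconnected := fun h => hnc ⟨h⟩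
  simp only [SimpleGraph.Preconnected, not_forall] at hnpre
  obtain ⟨a, b, hab⟩ := hnpre
  set Y1 : Set V := Subtype.val '' {u : ↥Y | (G.induce Y).Reachable a u} with hY1def
  have hY1sub : Y1 ⊆ Y := by
    rintro v ⟨u, _, rfl⟩; exact u.2
  set Y2 : Set V := Y \ Y1 with hY2def
  have haY1 : (a : V) ∈ Y1 := ⟨a, SimpleGraph.Reachable.refl a, rfl⟩
  have hbY2 : (b : V) ∈ Y2 := by
    refine ⟨b.2, ?_⟩
    rintro ⟨u, hu, hub⟩
    exact hab (Subtype.ext hub ▸ hu)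
  have hNoEdge : ∀ u w, u ∈ Y1 → w ∈ Y2 → ¬ G.Adj u w := by
    rintro u w ⟨u', hu', rfl⟩ hw hadj
    apply hw.2
    have hadj' : (G.induce Y).Adj u' ⟨w, hw.1⟩ := hadj
    exact ⟨⟨w, hw.1⟩, hu'.trans hadj'.reachable, rfl⟩
  have hsplitY : ∀ w, w ∈ Y → w ∈ Y1 ∨ w ∈ Y2 := by
    intro w hw
    by_cases h : w ∈ Y1
    · exact Or.inl h
    · exact Or.inr ⟨hw, h⟩
  have hpairAdj : ∀ e ∈ Cl, ∀ u w : V, u ∈ e → w ∈ e → u ≠ w → G.Adj u w := by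
    intro e he u w hu hw huw
    have heE : e ∈ G.edgeSet := (hcirc last).1 he
    have heq : e = s(u, w) := (Sym2.mem_and_mem_iff huw).1 ⟨hu, hw⟩
    rw [heq] at heE
    exact heE
  have hEnd : ∀ e ∈ Cl, ∀ v : V, v ∈ e → v ∈ X ∪ Y := by
    intro e he v hv
    have hvE : v ∈ edgeVerts Cl := ⟨e, he, hv⟩
    rw [hX, Set.diff_union_of_subset hYsub]
    exact hvE
  set A : Set (Sym2 V) := {e ∈ Cl | ∀ v : V, v ∈ e → v ∈ X ∪ Y1} with hAdef
  set B : Set (Sym2 V) := {e ∈ Cl | ∀ v : V, v ∈ e → v ∈ X ∪ Y2} with hBdef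
  have hAsub : A ⊆ Cl := sep_subset _ _
  have hBsub : B ⊆ Cl := sep_subset _ _
  have hAB : A ∪ B = Cl := by
    apply subset_antisymm (union_subset hAsub hBsub)
    intro e he
    by_cases h2 : ∃ v : V, v ∈ e ∧ v ∈ Y2
    · obtain ⟨v, hve, hv2⟩ := h2
      refine Or.inr ⟨he, fun w hwe => ?_⟩
      rcases hEnd e he w hwe with hwX | hwY
      · exact Or.inl hwX
      rcases hsplitY w hwY with hw1 | hw2
      · exfalso
        have hwv : w ≠ v := fun h => (h ▸ hw1 : v ∈ Y1) |> fun hv1 => hv2.2 hv1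
        exact hNoEdge w v hw1 hv2 (hpairAdj e he w v hwe hve hwv)
      · exact Or.inr hw2
    · push_neg at h2
      refine Or.inl ⟨he, fun w hwe => ?_⟩
      rcases hEnd e he w hwe with hwX | hwY
      · exact Or.inl hwX
      rcases hsplitY w hwY with hw1 | hw2
      · exact Or.inr hw1
      · exact absurd hw2 (h2 w hwe)
  have hABint : Cl ∩ D ⊆ A ∩ B := by
    rintro e ⟨heCl, heD⟩
    obtain ⟨j, hj, hej⟩ := mem_iUnion₂.1 heD
    have hvX : ∀ v : V, v ∈ e → v ∈ X := by
      intro v hv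
      rw [hXD]
      exact ⟨⟨e, heCl, hv⟩, ⟨e, mem_biUnion hj hej, hv⟩⟩
    exact ⟨⟨heCl, fun v hv => Or.inl (hvX v hv)⟩, ⟨heCl, fun v hv => Or.inl (hvX v hv)⟩⟩
  -- nonemptiness / properness of A, B
  have hedge_of_Y1 : ∀ u ∈ Y1, ∀ e ∈ Cl, u ∈ e → e ∈ A := by
    intro u hu e he hue
    refine ⟨he, fun w hwe => ?_⟩
    rcases hEnd e he w hwe with hwX | hwY
    · exact Or.inl hwX
    rcases hsplitY w hwY with hw1 | hw2
    · exact Or.inr hw1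
    · exfalso
      have huw : u ≠ w := fun h => hw2.2 (h ▸ hu)
      exact hNoEdge u w hu hw2 (hpairAdj e he u w hue hwe huw)
  have hedge_of_Y2 : ∀ u ∈ Y2, ∀ e ∈ Cl, u ∈ e → e ∈ B := by
    intro u hu e he hue
    refine ⟨he, fun w hwe => ?_⟩
    rcases hEnd e he w hwe with hwX | hwY
    · exact Or.inl hwX
    rcases hsplitY w hwY with hw1 | hw2
    · exfalso
      have hwu : w ≠ u := fun h => hu.2 (h ▸ hw1)
      exact hNoEdge w u hw1 hu (hpairAdj e he w u hwe hue hwu)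
    · exact Or.inr hw2
  obtain ⟨ea, heaCl, haea⟩ := hYsub (hY1sub haY1)
  obtain ⟨eb, hebCl, hbeb⟩ := hYsub hbY2.1
  have hAne : A.Nonempty := ⟨ea, hedge_of_Y1 _ haY1 ea heaCl haea⟩
  have hBne : B.Nonempty := ⟨eb, hedge_of_Y2 _ hbY2 eb hebCl hbeb⟩
  have hAneq : A ≠ Cl := by
    intro h
    have : eb ∈ A := h ▸ hebCl
    rcases this.2 (b : V) hbeb with hbX | hb1
    · exact (hXdisjY.ne_of_mem hbX hbY2.1) rfl
    · exact hbY2.2 hb1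
  have hBneq : B ≠ Cl := by
    intro h
    have : ea ∈ B := h ▸ heaCl
    rcases this.2 (a : V) haea with haX | ha2
    · exact (hXdisjY.ne_of_mem haX (hY1sub haY1)) rfl
    · exact ha2.2 haY1
  have hAcount := (hcirc last).2.2 A hAsub hAneq hAne.ne_empty
  have hBcount := (hcirc last).2.2 B hBsub hBneq hBne.ne_empty
  have hAEV : edgeVerts A ⊆ X ∪ Y1 := by
    rintro v ⟨e, ⟨_, he2⟩, hv⟩
    exact he2 v hv
  have hBEV : edgeVerts B ⊆ X ∪ Y2 := by
    rintro v ⟨e, ⟨_, he2⟩, hv⟩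
    exact he2 v hv
  have hXY1 : (X ∪ Y1).ncard = X.ncard + Y1.ncard :=
    Set.ncard_union_eq (hXdisjY.mono_right hY1sub) (toFinite _) (toFinite _)
  have hXY2 : (X ∪ Y2).ncard = X.ncard + Y2.ncard :=
    Set.ncard_union_eq (hXdisjY.mono_right diff_subset) (toFinite _) (toFinite _)
  have h12 : Y2.ncard + Y1.ncard = Y.ncard := by
    rw [hY2def]
    exact Set.ncard_diff_add_ncard_of_subset hY1sub (toFinite _)
  have hABcard : (A ∪ B).ncard + (A ∩ B).ncard = A.ncard + B.ncard :=
    Set.ncard_union_add_ncard_inter _ _ (toFinite _) (toFinite _)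
  rw [hAB] at hABcard
  have hABge := Set.ncard_le_ncard hABint (toFinite _)
  have h1 := Set.ncard_le_ncard hAEV (toFinite _)
  have h2 := Set.ncard_le_ncard hBEV (toFinite _)
  omega
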